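/- arXiv:2309.12559 — 3 statements merged into one kernel-verified Lean document; each statement's English description precedes it below -/
import Mathlib

section
/- If a random variable Δ taking values in [0,1] satisfies P(Δ ≥ η) ≤ exp(−2nη²) for all η ≥ 0 (with n ≥ 1 a natural number), then E[exp(2(n−1)Δ²)] ≤ n. -/
open MeasureTheory

/-- If `Δ ∈ [0,1]` satisfies the Hoeffding tail bound
`P(Δ ≥ η) ≤ exp(−2nη²)` for all `η ≥ 0` (with `n ≥ 1`), then
`E[exp(2(n−1)Δ²)] ≤ n`. -/
theorem stmt4 {Ω : Type*} [MeasurableSpace Ω] (μ : Measure Ω) [IsProbabilityMeasure μ]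
    (Δ : Ω → ℝ) (hΔ : Measurable Δ) (h01 : ∀ ω, Δ ω ∈ Set.Icc (0:ℝ) 1)
    (n : ℕ) (hn : 1 ≤ n)
    (htail : ∀ η : ℝ, 0 ≤ η →
      (μ {ω | η ≤ Δ ω}).toReal ≤ Real.exp (-2 * (n : ℝ) * η ^ 2)) :
    ∫ ω, Real.exp (2 * ((n : ℝ) - 1) * (Δ ω) ^ 2) ∂μ ≤ (n : ℝ) := by
  rcases eq_or_lt_of_le hn with h1 | h2
  · -- case n = 1
    have hsimp : ∀ ω, Real.exp (2 * ((n : ℝ) - 1) * (Δ ω) ^ 2) = 1 := by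
      intro ω
      rw [← h1]
      norm_num
    simp only [hsimp]
    simp [← h1]
  -- case n ≥ 2
  have hn1 : (1:ℝ) < (n:ℝ) := by exact_mod_cast h2
  set c : ℝ := 2 * ((n:ℝ) - 1) with hc_def
  have hc : 0 < c := by simp only [hc_def]; linarith
  set f : Ω → ℝ := fun ω => Real.exp (c * (Δ ω) ^ 2) with hf_def
  have hf_meas : Measurable f := by
    exact (Real.measurable_exp).comp ((measurable_const.mul (hΔ.pow measurable_const)))
  have hf_nn : ∀ ω, 0 ≤ f ω := fun ω => (Real.exp_pos _).le
  have hf_bdd : ∀ ω, f ω ≤ Real.exp c := by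
    intro ω
    apply Real.exp_le_exp.mpr
    have h0 := (h01 ω).1
    have h1 := (h01 ω).2
    have hsq : (Δ ω) ^ 2 ≤ 1 := by nlinarith
    nlinarith [mul_le_mul_of_nonneg_left hsq hc.le]
  have hf_int : Integrable f μ := by
    refine (integrable_const (Real.exp c)).mono' hf_meas.aestronglyMeasurable ?_
    filter_upwards with ω
    rw [Real.norm_of_nonneg (hf_nn ω)]
    exact hf_bdd ω
  have layer := hf_int.integral_eq_integral_meas_lt (ae_of_all _ hf_nn)
  set p : ℝ := (n:ℝ) / ((n:ℝ) - 1) with hp_def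
  have hp1 : 1 < p := by
    rw [hp_def, lt_div_iff₀ (by linarith)]
    linarith
  set F : ℝ → ℝ := fun t => (μ {a | t < f a}).toReal with hF_def
  have hF_anti : Antitone F := by
    intro s t hst
    apply ENNReal.toReal_mono (measure_ne_top _ _)
    exact measure_mono (fun a ha => lt_of_le_of_lt hst ha)
  have hF_nn : ∀ t, 0 ≤ F t := fun t => ENNReal.toReal_nonneg
  have hF_le_one : ∀ t, F t ≤ 1 := by
    intro t
    have := prob_le_one (μ := μ) (s := {a | t < f a})
    simpa using ENNReal.toReal_mono (by simp) this
  -- tail bound for t > 1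
  have hF_tail : ∀ t : ℝ, 1 < t → F t ≤ t ^ (-p) := by
    intro t ht
    have hlogt : 0 < Real.log t := Real.log_pos ht
    set η : ℝ := Real.sqrt (Real.log t / c) with hη_def
    have hη_nn : 0 ≤ η := Real.sqrt_nonneg _
    have hη_sq : η ^ 2 = Real.log t / c := by
      rw [hη_def, Real.sq_sqrt (by positivity)]
    have hsub : {a | t < f a} ⊆ {ω | η ≤ Δ ω} := by
      intro ω hω
      simp only [Set.mem_setOf_eq] at hω ⊢
      have hlt : Real.log t < c * (Δ ω) ^ 2 := by
        calc Real.log t < Real.log (f ω) := Real.log_lt_log (by linarith) hω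
        _ = c * (Δ ω) ^ 2 := Real.log_exp _
      calc η = Real.sqrt (Real.log t / c) := hη_def
        _ ≤ Real.sqrt ((Δ ω) ^ 2) := Real.sqrt_le_sqrt (by rw [div_le_iff₀ hc]; nlinarith)
        _ = Δ ω := Real.sqrt_sq (h01 ω).1
    calc F t ≤ (μ {ω | η ≤ Δ ω}).toReal :=
          ENNReal.toReal_mono (measure_ne_top _ _) (measure_mono hsub)
      _ ≤ Real.exp (-2 * (n:ℝ) * η ^ 2) := htail η hη_nn
      _ = t ^ (-p) := by
          rw [hη_sq, Real.rpow_def_of_pos (by linarith : (0:ℝ) < t)]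
          congr 1
          have hne : (n:ℝ) - 1 ≠ 0 := by linarith
          field_simp [hc_def, hp_def, hne]
          rw [hc_def, hp_def]; field_simp
  -- integrability pieces
  have hF_meas : Measurable F := hF_anti.measurable
  have hint1 : IntegrableOn F (Set.Ioc (0:ℝ) 1) := by
    refine (integrableOn_const (C := (1:ℝ)) ?_).mono' (hF_meas.aestronglyMeasurable.restrict) ?_
    · rw [Real.volume_Ioc]; simp
    · filter_upwards with t
      rw [Real.norm_of_nonneg (hF_nn t)]
      exact hF_le_one t
  have hrpow_int : IntegrableOn (fun t : ℝ => t ^ (-p)) (Set.Ioi (1:ℝ)) :=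
    integrableOn_Ioi_rpow_of_lt (by linarith) one_pos
  have hint2 : IntegrableOn F (Set.Ioi (1:ℝ)) := by
    refine hrpow_int.mono' (hF_meas.aestronglyMeasurable.restrict) ?_
    rw [ae_restrict_iff' measurableSet_Ioi]
    filter_upwards with t ht
    rw [Real.norm_of_nonneg (hF_nn t)]
    exact hF_tail t ht
  have hsplit : ∫ t in Set.Ioi (0:ℝ), F t =
      (∫ t in Set.Ioc (0:ℝ) 1, F t) + ∫ t in Set.Ioi (1:ℝ), F t := by
    rw [← setIntegral_union (Set.Ioc_disjoint_Ioi le_rfl) measurableSet_Ioi hint1 hint2,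
      Set.Ioc_union_Ioi_eq_Ioi (zero_le_one)]
  have hbound1 : ∫ t in Set.Ioc (0:ℝ) 1, F t ≤ 1 := by
    calc ∫ t in Set.Ioc (0:ℝ) 1, F t ≤ ∫ _t in Set.Ioc (0:ℝ) 1, (1:ℝ) := by
          refine setIntegral_mono_on hint1 (integrableOn_const (C := (1:ℝ)) ?_)
            measurableSet_Ioc (fun t _ => hF_le_one t)
          rw [Real.volume_Ioc]; simp
      _ = 1 := by simp
  have hbound2 : ∫ t in Set.Ioi (1:ℝ), F t ≤ (n:ℝ) - 1 := by
    calc ∫ t in Set.Ioi (1:ℝ), F t ≤ ∫ t in Set.Ioi (1:ℝ), t ^ (-p) :=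
          setIntegral_mono_on hint2 hrpow_int measurableSet_Ioi (fun t ht => hF_tail t ht)
      _ = -1 ^ (-p + 1) / (-p + 1) := integral_Ioi_rpow_of_lt (by linarith) one_pos
      _ = (n:ℝ) - 1 := by
          have hne : (n:ℝ) - 1 ≠ 0 := by linarith
          have key : -((n:ℝ)/((n:ℝ)-1)) + 1 = -(1/((n:ℝ)-1)) := by
            field_simp
            ring
          rw [Real.one_rpow, hp_def, key]
          rw [div_neg, div_div_eq_mul_div, div_one]
          ring
  calc ∫ ω, Real.exp (2 * ((n : ℝ) - 1) * (Δ ω) ^ 2) ∂μ = ∫ t in Set.Ioi (0:ℝ), F t := layer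
    _ = (∫ t in Set.Ioc (0:ℝ) 1, F t) + ∫ t in Set.Ioi (1:ℝ), F t := hsplit
    _ ≤ 1 + ((n:ℝ) - 1) := add_le_add hbound1 hbound2
    _ = (n:ℝ) := by ring
end

section
/- Let C be a binary random variable and Y a binary random variable in a structural causal model where C is exogenous relative to Y (interventional probabilities equal conditional probabilities) and Y is monotonic relative to C (P(Y_{C=c}=y, Y_{C=c̄}≠y)=0 or P(Y_{C=c}≠y, Y_{C=c̄}=y)=0). Then PNS(c,c̄) := P(Y_{C=c}=y | C=c̄, Y≠y)·P(C=c̄, Y≠y) + P(Y_{C=c̄}≠y | C=c, Y=y)·P(C=c, Y=y) equals P(Y=y|C=c) − P(Y=y|C=c̄). -/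
open MeasureTheory

/-- Pearl's PNS identification: with binary cause `C` (value `true`
playing the role of `c` and `false` of `c̄`), outcome `Y`, and counterfactual
outcomes `Yc = Y_{C=c}`, `Ycbar = Y_{C=c̄}`, under consistency, exogeneity
(interventional = conditional probabilities) and monotonicity,
`PNS(c,c̄) = P(Y_{C=c}=y | C=c̄, Y≠y)·P(C=c̄, Y≠y)
          + P(Y_{C=c̄}≠y | C=c, Y=y)·P(C=c, Y=y)
          = P(Y=y|C=c) − P(Y=y|C=c̄)`. -/
theorem stmt9 {Ω : Type*} [MeasurableSpace Ω] (μ : Measure Ω) [IsProbabilityMeasure μ]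
    (C Y Yc Ycbar : Ω → Bool) (y : Bool)
    (hC : Measurable C) (hY : Measurable Y) (hYc : Measurable Yc)
    (hYcbar : Measurable Ycbar)
    (hcons_c : ∀ ω, C ω = true → Y ω = Yc ω)
    (hcons_cbar : ∀ ω, C ω = false → Y ω = Ycbar ω)
    (hpos_c : 0 < (μ {ω | C ω = true}).toReal)
    (hpos_cbar : 0 < (μ {ω | C ω = false}).toReal)
    (hpos_cy : 0 < (μ {ω | C ω = true ∧ Y ω = y}).toReal)
    (hpos_cbary : 0 < (μ {ω | C ω = false ∧ Y ω ≠ y}).toReal)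
    (hexo_c : (μ {ω | Yc ω = y}).toReal =
      (μ {ω | Y ω = y ∧ C ω = true}).toReal / (μ {ω | C ω = true}).toReal)
    (hexo_cbar : (μ {ω | Ycbar ω = y}).toReal =
      (μ {ω | Y ω = y ∧ C ω = false}).toReal / (μ {ω | C ω = false}).toReal)
    (hmono : μ {ω | Yc ω ≠ y ∧ Ycbar ω = y} = 0) :
    ((μ {ω | Yc ω = y ∧ C ω = false ∧ Y ω ≠ y}).toReal /
        (μ {ω | C ω = false ∧ Y ω ≠ y}).toReal) *
      (μ {ω | C ω = false ∧ Y ω ≠ y}).toReal +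
    ((μ {ω | Ycbar ω ≠ y ∧ C ω = true ∧ Y ω = y}).toReal /
        (μ {ω | C ω = true ∧ Y ω = y}).toReal) *
      (μ {ω | C ω = true ∧ Y ω = y}).toReal
    = (μ {ω | Y ω = y ∧ C ω = true}).toReal / (μ {ω | C ω = true}).toReal -
      (μ {ω | Y ω = y ∧ C ω = false}).toReal / (μ {ω | C ω = false}).toReal := by

  rw [div_mul_cancel₀ _ (ne_of_gt hpos_cbary), div_mul_cancel₀ _ (ne_of_gt hpos_cy),
    ← hexo_c, ← hexo_cbar]
  have mYc : MeasurableSet {ω | Yc ω = y} := hYc (measurableSet_singleton y)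
  have mYcbar : MeasurableSet {ω | Ycbar ω = y} := hYcbar (measurableSet_singleton y)
  have mC : MeasurableSet {ω | C ω = true} := hC (measurableSet_singleton true)
  -- split P(Yc = y)
  have hA : μ {ω | Yc ω = y} =
      μ ({ω | Yc ω = y} ∩ {ω | Ycbar ω = y}) + μ ({ω | Yc ω = y} \ {ω | Ycbar ω = y}) :=
    (measure_inter_add_diff _ mYcbar).symm
  -- P(Ycbar = y) = P(Yc = y, Ycbar = y) using monotonicity
  have hdiff0 : μ ({ω | Ycbar ω = y} \ {ω | Yc ω = y}) = 0 := by
    rw [← hmono]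
    congr 1
    ext ω
    simp only [Set.mem_diff, Set.mem_setOf_eq]
    tauto
  have hB : μ {ω | Ycbar ω = y} = μ ({ω | Yc ω = y} ∩ {ω | Ycbar ω = y}) := by
    have := measure_inter_add_diff (μ := μ) {ω | Ycbar ω = y} mYc
    rw [hdiff0, add_zero] at this
    rw [← this, Set.inter_comm]
  -- split the "benefit" event by C
  have hD : μ ({ω | Yc ω = y} \ {ω | Ycbar ω = y}) =
      μ (({ω | Yc ω = y} \ {ω | Ycbar ω = y}) ∩ {ω | C ω = true}) +
      μ (({ω | Yc ω = y} \ {ω | Ycbar ω = y}) \ {ω | C ω = true}) :=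
    (measure_inter_add_diff _ mC).symm
  have e1 : {ω | Yc ω = y ∧ C ω = false ∧ Y ω ≠ y} =
      ({ω | Yc ω = y} \ {ω | Ycbar ω = y}) \ {ω | C ω = true} := by
    ext ω
    simp only [Set.mem_diff, Set.mem_inter_iff, Set.mem_setOf_eq, Bool.not_eq_true]
    constructor
    · rintro ⟨h1, h2, h3⟩
      exact ⟨⟨h1, by rw [← hcons_cbar ω h2]; exact h3⟩, h2⟩
    · rintro ⟨⟨h1, h3⟩, h2⟩
      exact ⟨h1, h2, by rw [hcons_cbar ω h2]; exact h3⟩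
  have e2 : {ω | Ycbar ω ≠ y ∧ C ω = true ∧ Y ω = y} =
      ({ω | Yc ω = y} \ {ω | Ycbar ω = y}) ∩ {ω | C ω = true} := by
    ext ω
    simp only [Set.mem_diff, Set.mem_inter_iff, Set.mem_setOf_eq]
    constructor
    · rintro ⟨h1, h2, h3⟩
      exact ⟨⟨by rw [← hcons_c ω h2]; exact h3, h1⟩, h2⟩
    · rintro ⟨⟨h3, h1⟩, h2⟩
      exact ⟨h1, h2, by rw [hcons_c ω h2]; exact h3⟩
  rw [e1, e2]
  have key : μ (({ω | Yc ω = y} \ {ω | Ycbar ω = y}) \ {ω | C ω = true}) +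
      μ (({ω | Yc ω = y} \ {ω | Ycbar ω = y}) ∩ {ω | C ω = true}) +
      μ {ω | Ycbar ω = y} = μ {ω | Yc ω = y} := by
    rw [hA, hB, hD]; ring
  have tkey := congrArg ENNReal.toReal key
  rw [ENNReal.toReal_add (by finiteness) (by finiteness),
    ENNReal.toReal_add (by finiteness) (by finiteness)] at tkey
  linarith
end

section
/- Under consistency (C=c ⇒ Y=Y_{C=c}) and monotonicity (P(Y_{C=c}≠y ∧ Y_{C=c̄}=y)=0), the PNS of Definition 2.1 satisfies PNS(c,c̄) = P(Y_{C=c}=y) − P(Y_{C=c̄}=y), i.e., PNS equals the difference of interventional probabilities even without exogeneity. -/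
open MeasureTheory

/-- Under consistency and monotonicity (but without exogeneity),
`PNS(c,c̄) = P(Y_{C=c}=y, C=c̄, Y≠y) + P(Y_{C=c̄}≠y, C=c, Y=y)
          = P(Y_{C=c}=y) − P(Y_{C=c̄}=y)`,
the difference of interventional probabilities. Again `true` plays the role of
`c` and `false` of `c̄`. -/
theorem stmt10 {Ω : Type*} [MeasurableSpace Ω] (μ : Measure Ω) [IsProbabilityMeasure μ]
    (C Y Yc Ycbar : Ω → Bool) (y : Bool)
    (hC : Measurable C) (hY : Measurable Y) (hYc : Measurable Yc)
    (hYcbar : Measurable Ycbar)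
    (hcons_c : ∀ ω, C ω = true → Y ω = Yc ω)
    (hcons_cbar : ∀ ω, C ω = false → Y ω = Ycbar ω)
    (hmono : μ {ω | Yc ω ≠ y ∧ Ycbar ω = y} = 0) :
    (μ {ω | Yc ω = y ∧ C ω = false ∧ Y ω ≠ y}).toReal +
      (μ {ω | Ycbar ω ≠ y ∧ C ω = true ∧ Y ω = y}).toReal
    = (μ {ω | Yc ω = y}).toReal - (μ {ω | Ycbar ω = y}).toReal := by
  have hYcS : MeasurableSet {ω | Yc ω = y} := hYc (measurableSet_singleton y)
  have hYcbarS : MeasurableSet {ω | Ycbar ω = y} := hYcbar (measurableSet_singleton y)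
  have hCS : MeasurableSet {ω | C ω = true} := hC (measurableSet_singleton true)
  set D : Set Ω := {ω | Yc ω = y ∧ Ycbar ω ≠ y} with hD
  have hDS : MeasurableSet D := hYcS.inter hYcbarS.compl
  -- rewrite first set
  have e1 : {ω | Yc ω = y ∧ C ω = false ∧ Y ω ≠ y} = D \ {ω | C ω = true} := by
    ext ω
    simp only [hD, Set.mem_setOf_eq, Set.mem_diff, Bool.not_eq_true]
    constructor
    · rintro ⟨h1, h2, h3⟩
      refine ⟨⟨h1, ?_⟩, h2⟩
      rw [← hcons_cbar ω h2]; exact h3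
    · rintro ⟨⟨h1, h3⟩, h2⟩
      refine ⟨h1, h2, ?_⟩
      rw [hcons_cbar ω h2]; exact h3
  have e2 : {ω | Ycbar ω ≠ y ∧ C ω = true ∧ Y ω = y} = D ∩ {ω | C ω = true} := by
    ext ω
    simp only [hD, Set.mem_setOf_eq, Set.mem_inter_iff]
    constructor
    · rintro ⟨h1, h2, h3⟩
      refine ⟨⟨?_, h1⟩, h2⟩
      rw [← hcons_c ω h2]; exact h3
    · rintro ⟨⟨h3, h1⟩, h2⟩
      refine ⟨h1, h2, ?_⟩
      rw [hcons_c ω h2]; exact h3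
  have hsum : μ {ω | Yc ω = y ∧ C ω = false ∧ Y ω ≠ y} +
      μ {ω | Ycbar ω ≠ y ∧ C ω = true ∧ Y ω = y} = μ D := by
    rw [e1, e2, add_comm, measure_inter_add_diff D hCS]
  -- μ {Yc = y} = μ D + μ (common)
  have h2 : μ {ω | Yc ω = y ∧ Ycbar ω = y} + μ D = μ {ω | Yc ω = y} := by
    have := measure_inter_add_diff {ω | Yc ω = y} hYcbarS (μ := μ)
    convert this using 3 <;> ext ω <;> simp [hD, Set.mem_setOf_eq, and_comm]
  -- μ {Ycbar = y} = μ (common)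
  have h3 : μ {ω | Ycbar ω = y} = μ {ω | Yc ω = y ∧ Ycbar ω = y} := by
    have := measure_inter_add_diff {ω | Ycbar ω = y} hYcS (μ := μ)
    have hz : μ ({ω | Ycbar ω = y} \ {ω | Yc ω = y}) = 0 := by
      refine measure_mono_null ?_ hmono
      intro ω hω
      exact ⟨hω.2, hω.1⟩
    rw [hz, add_zero] at this
    rw [← this]
    congr 1
    ext ω; simp [Set.mem_setOf_eq, and_comm]
  have hfin : ∀ s : Set Ω, μ s ≠ ⊤ := fun s => measure_ne_top μ s
  rw [← ENNReal.toReal_add (hfin _) (hfin _), hsum, h3, ← h2,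
    ENNReal.toReal_add (hfin _) (hfin _)]
  ring
end
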